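/- For all n ≥ 2, the number of permutations of length n avoiding both 132 and 123 satisfies the recurrence a_n = 2·a_{n−1}, with a_1 = 1; equivalently the generating function of |Av_n(132, 123)| is (1−x)/(1−2x). -/

import Mathlib

def Avoids132 {n : ℕ} (π : Fin n → Fin n) : Prop :=
  ¬ ∃ i j k : Fin n, i < j ∧ j < k ∧ π i < π k ∧ π k < π j

def Avoids123 {n : ℕ} (π : Fin n → Fin n) : Prop :=
  ¬ ∃ i j k : Fin n, i < j ∧ j < k ∧ π i < π j ∧ π j < π k

open Finset Equiv

lemma avoids_iff_noDouble {n : ℕ} (π : Equiv.Perm (Fin n)) :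
    (Avoids132 ⇑π ∧ Avoids123 ⇑π) ↔
      ¬ ∃ i j k : Fin n, i < j ∧ j < k ∧ π i < π j ∧ π i < π k := by
  unfold Avoids132 Avoids123
  constructor
  · rintro ⟨h1, h2⟩ ⟨i, j, k, hij, hjk, h3, h4⟩
    rcases lt_trichotomy (π j) (π k) with h | h | h
    · exact h2 ⟨i, j, k, hij, hjk, h3, h⟩
    · exact (ne_of_lt hjk) (π.injective h)
    · exact h1 ⟨i, j, k, hij, hjk, h4, h⟩
  · intro h
    constructor
    · rintro ⟨i, j, k, hij, hjk, h3, h4⟩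
      exact h ⟨i, j, k, hij, hjk, lt_trans h3 h4, h3⟩
    · rintro ⟨i, j, k, hij, hjk, h3, h4⟩
      exact h ⟨i, j, k, hij, hjk, h3, lt_trans h3 h4⟩

lemma noDouble_iff_bound {n : ℕ} (π : Equiv.Perm (Fin n)) :
    (¬ ∃ i j k : Fin n, i < j ∧ j < k ∧ π i < π j ∧ π i < π k) ↔
      ∀ p : Fin n, n ≤ (p : ℕ) + 2 + (π p : ℕ) := by
  constructor
  · intro h p
    by_contra hb
    push_neg at hb
    set T := univ.filter (fun q : Fin n => p < q ∧ π p < π q) with hTdef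
    have hT2 : 2 ≤ T.card := by
      set S := univ.filter (fun v : Fin n => π p < v) with hSdef
      set B := univ.filter (fun q : Fin n => π p < π q) with hBdef
      set Bs := univ.filter (fun q : Fin n => q < p ∧ π p < π q) with hBsdef
      have hS : S = Finset.Ioi (π p) := by
        ext v; simp [hSdef, Finset.mem_Ioi]
      have hScard : S.card = n - 1 - (π p : ℕ) := by
        rw [hS, Fin.card_Ioi]
      have hSB : S.card ≤ B.card := by
        apply Finset.card_le_card_of_injOn (fun v => π.symm v)
        · intro v hv
          simp only [Finset.mem_coe, hSdef, mem_filter, mem_univ, true_and] at hv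
          simp only [Finset.mem_coe, hBdef, mem_filter, mem_univ, true_and, Equiv.apply_symm_apply]
          exact hv
        · exact fun a _ b _ hab => π.symm.injective hab
      have hBsub : B ⊆ Bs ∪ T := by
        intro q hq
        simp only [hBdef, mem_filter, mem_univ, true_and] at hq
        have hne : q ≠ p := fun hqp => absurd (hqp ▸ hq) (lt_irrefl _)
        rcases lt_or_gt_of_ne hne with h' | h'
        · exact Finset.mem_union_left _ (by simp [hBsdef, h', hq])
        · exact Finset.mem_union_right _ (by simp [hTdef, h', hq])
      have hBs : Bs.card ≤ (p : ℕ) := by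
        have : Bs ⊆ Finset.Iio p := by
          intro q hq
          simp only [hBsdef, mem_filter, mem_univ, true_and] at hq
          simpa [Finset.mem_Iio] using hq.1
        calc Bs.card ≤ (Finset.Iio p).card := Finset.card_le_card this
          _ = (p : ℕ) := Fin.card_Iio p
      have hB : B.card ≤ Bs.card + T.card :=
        le_trans (Finset.card_le_card hBsub) (Finset.card_union_le _ _)
      have hp : (p : ℕ) < n := p.isLt
      have hpp : (π p : ℕ) < n := (π p).isLt
      omega
    obtain ⟨a, ha, b, hb', hab⟩ := Finset.one_lt_card.mp hT2
    simp only [hTdef, mem_filter, mem_univ, true_and] at ha hb'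
    rcases lt_or_gt_of_ne hab with h' | h'
    · exact h ⟨p, a, b, ha.1, h', ha.2, hb'.2⟩
    · exact h ⟨p, b, a, hb'.1, h', hb'.2, ha.2⟩
  · intro h
    rintro ⟨i, j, k, hij, hjk, h3, h4⟩
    set A := univ.filter (fun p : Fin n => p < i ∧ π p < π i) with hAdef
    set C := univ.filter (fun p : Fin n => p < i ∧ π i < π p) with hCdef
    have hAC : (i : ℕ) ≤ A.card + C.card := by
      have hsub : Finset.Iio i ⊆ A ∪ C := by
        intro q hq
        rw [Finset.mem_Iio] at hq
        have hne : π q ≠ π i := fun hqi => absurd (π.injective hqi ▸ hq) (lt_irrefl _)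
        rcases lt_or_gt_of_ne hne with h' | h'
        · exact Finset.mem_union_left _ (by simp [hAdef, hq, h'])
        · exact Finset.mem_union_right _ (by simp [hCdef, hq, h'])
      calc (i : ℕ) = (Finset.Iio i).card := (Fin.card_Iio i).symm
        _ ≤ (A ∪ C).card := Finset.card_le_card hsub
        _ ≤ A.card + C.card := Finset.card_union_le _ _
    have hjC : j ∉ insert k C := by
      simp only [Finset.mem_insert, hCdef, mem_filter, mem_univ, true_and]
      push_neg
      exact ⟨ne_of_lt hjk, fun hji => absurd (lt_trans hij hji) (lt_irrefl _)⟩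
    have hkC : k ∉ C := by
      simp only [hCdef, mem_filter, mem_univ, true_and]
      rintro ⟨hki, -⟩
      exact absurd (lt_trans hij (lt_trans hjk hki)) (lt_irrefl _)
    have hC : C.card + 2 ≤ n - 1 - (π i : ℕ) := by
      have hcard : (insert j (insert k C)).card = C.card + 2 := by
        rw [Finset.card_insert_of_notMem hjC, Finset.card_insert_of_notMem hkC]
      have hle : (insert j (insert k C)).card ≤ (Finset.Ioi (π i)).card := by
        apply Finset.card_le_card_of_injOn (fun q => π q)
        · intro q hq
          simp only [Finset.mem_coe, Finset.mem_insert] at hq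
          rw [Finset.mem_coe, Finset.mem_Ioi]
          rcases hq with rfl | rfl | hq
          · exact h3
          · exact h4
          · simp only [hCdef, mem_filter, mem_univ, true_and] at hq
            exact hq.2
        · exact fun a _ b _ hab => π.injective hab
      rw [Fin.card_Ioi] at hle
      omega
    have hA : A.card ≤ (π i : ℕ) - (n - 1 - (i : ℕ)) := by
      have hle : A.card ≤ (Finset.Ico (n - 1 - (i : ℕ)) ((π i : ℕ))).card := by
        apply Finset.card_le_card_of_injOn (fun p => ((π p : ℕ)))
        · intro p hp
          simp only [Finset.mem_coe, hAdef, mem_filter, mem_univ, true_and] at hp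
          have hcond := h p
          have hpi : (p : ℕ) < (i : ℕ) := hp.1
          have hval : ((π p : ℕ)) < ((π i : ℕ)) := hp.2
          rw [Finset.mem_coe, Finset.mem_Ico]; beta_reduce
          omega
        · intro a ha b hb hab
          exact π.injective (Fin.ext hab)
      rw [Nat.card_Ico] at hle
      exact hle
    have hi := h i
    have hi2 : (i : ℕ) < n := i.isLt
    have hi3 : ((π i : ℕ)) < n := (π i).isLt
    omega

def QCond {n : ℕ} (σ : Equiv.Perm (Fin n)) : Prop :=
  ∀ p : Fin n, (σ p : ℕ) ≤ (p : ℕ) + 1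

lemma card_av_eq_q (n : ℕ) :
    Nat.card {π : Equiv.Perm (Fin n) // Avoids132 ⇑π ∧ Avoids123 ⇑π} =
      Nat.card {σ : Equiv.Perm (Fin n) // QCond σ} := by
  apply Nat.card_congr
  refine Equiv.subtypeEquiv (Equiv.mulLeft (Fin.revPerm : Equiv.Perm (Fin n))) (fun π => ?_)
  rw [avoids_iff_noDouble, noDouble_iff_bound]
  unfold QCond
  refine forall_congr' fun p => ?_
  have happ : (((Equiv.mulLeft (Fin.revPerm : Equiv.Perm (Fin n)) π) p : ℕ)) =
      n - 1 - ((π p : ℕ)) := by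
    show ((Fin.revPerm ((π p))) : ℕ) = n - 1 - ((π p : ℕ))
    simp [Fin.val_rev]
    omega
  rw [happ]
  have h1 : ((π p : ℕ)) < n := (π p).isLt
  have h2 : ((p : ℕ)) < n := p.isLt
  omega

lemma q_cond_iff {m : ℕ} (p : Fin (m + 2)) (e : Equiv.Perm (Fin (m + 1))) :
    ((p : ℕ) ≤ 1 ∧ QCond e) ↔ QCond (Equiv.Perm.decomposeFin.symm (p, e)) := by
  have hp2 : (p : ℕ) < m + 2 := p.isLt
  constructor
  · rintro ⟨hp, he⟩ y
    refine Fin.cases ?_ ?_ y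
    · simpa using hp
    · intro x
      rw [Equiv.Perm.decomposeFin_symm_apply_succ]
      have hx := he x
      have hcase : (p : ℕ) = 0 ∨ (p : ℕ) = 1 := by omega
      rcases hcase with h0 | h1
      · have hp0 : p = 0 := Fin.ext (by simpa using h0)
        subst hp0
        rw [Equiv.swap_self]
        simp only [Equiv.refl_apply, Fin.val_succ]
        omega
      · have hp1 : p = 1 := Fin.ext (by simpa using h1)
        subst hp1
        by_cases hex : e x = 0
        · rw [hex, Fin.succ_zero_eq_one, Equiv.swap_apply_right]
          simp
        · rw [Equiv.swap_apply_of_ne_of_ne (Fin.succ_ne_zero _) ?_]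
          · simp only [Fin.val_succ]
            omega
          · intro hcon
            apply hex
            apply Fin.ext
            have := congrArg Fin.val hcon
            simpa [Fin.val_succ] using this
  · intro h
    have hp : (p : ℕ) ≤ 1 := by
      have h0 := h 0
      rw [Equiv.Perm.decomposeFin_symm_apply_zero] at h0
      simpa using h0
    refine ⟨hp, fun x => ?_⟩
    have hx := h x.succ
    rw [Equiv.Perm.decomposeFin_symm_apply_succ] at hx
    have hcase : (p : ℕ) = 0 ∨ (p : ℕ) = 1 := by omega
    rcases hcase with h0 | h1
    · have hp0 : p = 0 := Fin.ext (by simpa using h0)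
      subst hp0
      rw [Equiv.swap_self] at hx
      simp only [Equiv.refl_apply, Fin.val_succ] at hx
      omega
    · have hp1 : p = 1 := Fin.ext (by simpa using h1)
      subst hp1
      by_cases hex : e x = 0
      · simp [hex]
      · rw [Equiv.swap_apply_of_ne_of_ne (Fin.succ_ne_zero _) ?_] at hx
        · simp only [Fin.val_succ] at hx
          omega
        · intro hcon
          apply hex
          apply Fin.ext
          have := congrArg Fin.val hcon
          simpa [Fin.val_succ] using this

lemma card_le_one_eq_two (m : ℕ) : Nat.card {p : Fin (m + 2) // (p : ℕ) ≤ 1} = 2 := by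
  apply Nat.card_eq_of_equiv_fin
  exact
    { toFun := fun x => ⟨(x.1 : ℕ), by have := x.2; omega⟩
      invFun := fun b => ⟨⟨(b : ℕ), by have := b.isLt; omega⟩, by
        have := b.isLt; simpa using Nat.lt_succ_iff.mp this⟩
      left_inv := fun x => Subtype.ext (Fin.ext rfl)
      right_inv := fun b => Fin.ext rfl }

lemma card_q_succ (m : ℕ) :
    Nat.card {σ : Equiv.Perm (Fin (m + 2)) // QCond σ} =
      2 * Nat.card {σ : Equiv.Perm (Fin (m + 1)) // QCond σ} := by
  have e1 : {σ : Equiv.Perm (Fin (m + 2)) // QCond σ} ≃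
      {x : Fin (m + 2) × Equiv.Perm (Fin (m + 1)) // (x.1 : ℕ) ≤ 1 ∧ QCond x.2} := by
    refine Equiv.subtypeEquiv Equiv.Perm.decomposeFin (fun σ => ?_)
    have := q_cond_iff (Equiv.Perm.decomposeFin σ).1 (Equiv.Perm.decomposeFin σ).2
    simp only [Prod.mk.eta, Equiv.symm_apply_apply] at this
    exact this.symm
  have e2 : {x : Fin (m + 2) × Equiv.Perm (Fin (m + 1)) // (x.1 : ℕ) ≤ 1 ∧ QCond x.2} ≃
      {p : Fin (m + 2) // (p : ℕ) ≤ 1} × {σ : Equiv.Perm (Fin (m + 1)) // QCond σ} :=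
    Equiv.subtypeProdEquivProd (p := fun a : Fin (m + 2) => (a : ℕ) ≤ 1)
      (q := fun σ : Equiv.Perm (Fin (m + 1)) => QCond σ)
  rw [Nat.card_congr (e1.trans e2), Nat.card_prod, card_le_one_eq_two]

theorem count_av132_123_recurrence :
    Nat.card {π : Equiv.Perm (Fin 1) // Avoids132 ⇑π ∧ Avoids123 ⇑π} = 1 ∧
    ∀ n : ℕ, 2 ≤ n →
      Nat.card {π : Equiv.Perm (Fin n) // Avoids132 ⇑π ∧ Avoids123 ⇑π} =
        2 * Nat.card {π : Equiv.Perm (Fin (n - 1)) //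
              Avoids132 ⇑π ∧ Avoids123 ⇑π} := by
  constructor
  · have hav : Avoids132 (⇑(1 : Equiv.Perm (Fin 1))) ∧ Avoids123 (⇑(1 : Equiv.Perm (Fin 1))) := by
      constructor <;>
      · rintro ⟨i, j, k, hij, -⟩
        have h1 : (i : ℕ) = 0 := by omega
        have h2 : (j : ℕ) = 0 := by omega
        have : (i : ℕ) < (j : ℕ) := hij
        omega
    haveI : Subsingleton (Equiv.Perm (Fin 1)) :=
      ⟨fun a b => Equiv.ext fun x => Subsingleton.elim _ _⟩
    haveI : Subsingleton {π : Equiv.Perm (Fin 1) // Avoids132 ⇑π ∧ Avoids123 ⇑π} :=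
      ⟨fun a b => Subtype.ext (Subsingleton.elim _ _)⟩
    haveI : Unique {π : Equiv.Perm (Fin 1) // Avoids132 ⇑π ∧ Avoids123 ⇑π} :=
      uniqueOfSubsingleton ⟨1, hav⟩
    exact Nat.card_unique
  · intro n hn
    obtain ⟨m, rfl⟩ : ∃ m, n = m + 2 := ⟨n - 2, by omega⟩
    have hsub : m + 2 - 1 = m + 1 := rfl
    rw [hsub, card_av_eq_q, card_av_eq_q, card_q_succ]
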